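/- Fix integers k ≥ 1 and p ≥ 0, and let λ be a partition all of whose parts lie in {k, k+1, ..., k+p}. Define L(λ) to be the partition with parts in {1,...,p+1} whose multiplicity of f (for 1 ≤ f ≤ p) equals the number of parts of λ congruent to f mod (p+1), and whose multiplicity of p+1 equals ∑_r ⌊λ_r/(p+1)⌋. Then the map λ ↦ L(λ) is injective on the set of such partitions λ. -/

import Mathlib

lemma key_mod (k p x : ℕ) (h1 : k ≤ x) (h2 : x ≤ k + p) :
    k + ((x % (p+1) + (p+1) - k % (p+1)) % (p+1)) = x := by
  obtain ⟨d, rfl⟩ : ∃ d, x = k + d := ⟨x - k, by omega⟩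
  have hd : d < p + 1 := by omega
  have hb : k % (p+1) < p + 1 := Nat.mod_lt _ (by omega)
  have h3 : (k + d) % (p+1) = (k % (p+1) + d) % (p+1) := by
    rw [Nat.add_mod, Nat.mod_eq_of_lt hd]
  rw [h3]
  rcases lt_or_ge (k % (p+1) + d) (p+1) with h | h
  · rw [Nat.mod_eq_of_lt h]
    have h4 : k % (p+1) + d + (p+1) - k % (p+1) = d + (p+1) := by omega
    rw [h4, Nat.add_mod_right, Nat.mod_eq_of_lt hd]
  · have he : (k % (p+1) + d) % (p+1) = k % (p+1) + d - (p+1) := by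
      rw [Nat.mod_eq_sub_mod h, Nat.mod_eq_of_lt (by omega)]
    rw [he]
    have h4 : k % (p+1) + d - (p+1) + (p+1) - k % (p+1) = d := by omega
    rw [h4, Nat.mod_eq_of_lt hd]

lemma g0_big (k p : ℕ) (hk : 1 ≤ k) : p + 1 ≤ k + ((0 + (p+1) - k % (p+1)) % (p+1)) := by
  rcases Nat.eq_zero_or_pos (k % (p+1)) with h | h
  · rw [h]
    simp only [Nat.sub_zero, Nat.zero_add, Nat.mod_self, Nat.add_zero]
    exact Nat.le_of_dvd (by omega) (Nat.dvd_of_mod_eq_zero h)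
  · have hb : k % (p+1) < p + 1 := Nat.mod_lt _ (by omega)
    rw [Nat.mod_eq_of_lt (by omega)]
    have := Nat.mod_le k (p+1)
    omega

/-- For a partition `λ` (as a multiset of parts) with all parts in `{k,...,k+p}`,
`L(λ)` is the partition whose multiplicity of `f` (for `1 ≤ f ≤ p`) is the number of
parts of `λ` congruent to `f` mod `p+1`, and whose multiplicity of `p+1` is
`∑_r ⌊λ_r/(p+1)⌋`. -/
def Lmap (p : ℕ) (lam : Multiset ℕ) : Multiset ℕ :=
  Multiset.replicate ((lam.map (· / (p + 1))).sum) (p + 1) +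
    (lam.map (· % (p + 1))).filter (· ≠ 0)

/-- The map `λ ↦ L(λ)` is injective on partitions with all parts in `{k,...,k+p}`,
for `k ≥ 1`. -/
theorem stmt_5 (k p : ℕ) (hk : 1 ≤ k) (lam₁ lam₂ : Multiset ℕ)
    (h₁ : ∀ x ∈ lam₁, k ≤ x ∧ x ≤ k + p) (h₂ : ∀ x ∈ lam₂, k ≤ x ∧ x ≤ k + p)
    (hL : Lmap p lam₁ = Lmap p lam₂) : lam₁ = lam₂ := by
  classical
  set g : ℕ → ℕ := fun r => k + ((r + (p+1) - k % (p+1)) % (p+1)) with hgdef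
  set F : Multiset ℕ → Multiset ℕ :=
    fun lam => (lam.map (· % (p + 1))).filter (· ≠ 0) with hFdef
  set S : Multiset ℕ → ℕ := fun lam => (lam.map (· / (p + 1))).sum with hSdef
  have hFmem : ∀ lam : Multiset ℕ, ∀ a ∈ F lam, a < p + 1 ∧ a ≠ 0 := by
    intro lam a ha
    rw [hFdef, Multiset.mem_filter, Multiset.mem_map] at ha
    obtain ⟨⟨y, hy, rfl⟩, hne⟩ := ha
    exact ⟨Nat.mod_lt _ (by omega), hne⟩
  have hfilt : ∀ lam : Multiset ℕ, (Lmap p lam).filter (· ≠ p + 1) = F lam := by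
    intro lam
    rw [Lmap, Multiset.filter_add]
    rw [show ((Multiset.replicate (S lam) (p+1)).filter (· ≠ p + 1)) = 0 from
      Multiset.filter_eq_nil.2 (fun a ha => by simp [Multiset.eq_of_mem_replicate ha])]
    rw [Multiset.filter_eq_self.2 (fun a ha => by
      have := hFmem lam a ha; omega)]
    simp [hFdef]
  have hF : F lam₁ = F lam₂ := by
    rw [← hfilt lam₁, ← hfilt lam₂, hL]
  have hcount : ∀ lam : Multiset ℕ, (Lmap p lam).count (p + 1) = S lam := by
    intro lam
    rw [Lmap, Multiset.count_add, Multiset.count_replicate_self,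
      Multiset.count_eq_zero.2 (fun h => by have := hFmem lam _ h; omega)]
    simp [hSdef]
  have hS : S lam₁ = S lam₂ := by
    rw [← hcount lam₁, ← hcount lam₂, hL]
  have hg : ∀ x, k ≤ x → x ≤ k + p → g (x % (p + 1)) = x := fun x h1 h2 =>
    key_mod k p x h1 h2
  have decomp : ∀ lam : Multiset ℕ, (∀ x ∈ lam, k ≤ x ∧ x ≤ k + p) →
      lam = (F lam).map g +
        Multiset.replicate (Multiset.card (lam.filter (fun y => ¬ y % (p+1) ≠ 0))) (g 0) := by
    intro lam hmem
    have h1 : (F lam).map g = lam.filter (fun y => y % (p+1) ≠ 0) := by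
      rw [hFdef]
      simp only [Multiset.filter_map, Multiset.map_map, Function.comp]
      refine Eq.trans (Multiset.map_congr rfl (fun y hy => ?_)) (Multiset.map_id _)
      rw [Multiset.mem_filter] at hy
      show g (y % (p + 1)) = y
      exact hg y (hmem y hy.1).1 (hmem y hy.1).2
    have h2 : lam.filter (fun y => ¬ y % (p+1) ≠ 0) =
        Multiset.replicate (Multiset.card (lam.filter (fun y => ¬ y % (p+1) ≠ 0))) (g 0) := by
      rw [Multiset.eq_replicate]
      refine ⟨rfl, fun b hb => ?_⟩
      rw [Multiset.mem_filter] at hb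
      have hb0 : b % (p+1) = 0 := by simpa using hb.2
      rw [← hg b (hmem b hb.1).1 (hmem b hb.1).2, hb0]
    rw [h1, ← h2, Multiset.filter_add_not]
  have hSval : ∀ (m : Multiset ℕ) (c : ℕ),
      S (Multiset.map g m + Multiset.replicate c (g 0)) =
        (m.map (fun r => g r / (p+1))).sum + c * (g 0 / (p+1)) := by
    intro m c
    simp [hSdef, Multiset.map_add, Multiset.sum_add, Multiset.map_map,
      Multiset.map_replicate, Multiset.sum_replicate, Function.comp]
  have hq0 : 1 ≤ g 0 / (p + 1) := by
    have := g0_big k p hk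
    exact Nat.one_le_div_iff (by omega) |>.2 this
  have hc0 : Multiset.card (lam₁.filter (fun y => ¬ y % (p+1) ≠ 0)) =
      Multiset.card (lam₂.filter (fun y => ¬ y % (p+1) ≠ 0)) := by
    have e1 := hSval (F lam₁) (Multiset.card (lam₁.filter (fun y => ¬ y % (p+1) ≠ 0)))
    have e2 := hSval (F lam₂) (Multiset.card (lam₂.filter (fun y => ¬ y % (p+1) ≠ 0)))
    rw [← decomp lam₁ h₁] at e1
    rw [← decomp lam₂ h₂] at e2
    rw [hS, e2, hF] at e1
    have := Nat.add_left_cancel e1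
    exact Nat.eq_of_mul_eq_mul_right (by omega) this.symm
  rw [decomp lam₁ h₁, decomp lam₂ h₂, hF, hc0]
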